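/- arXiv:math-ph/0610004 — 5 statements merged into one kernel-verified Lean document; each statement's English description precedes it below -/
import Mathlib

section
/- Let w : ℝ → ℝ³ be differentiable with w(t) ≠ 0, write a := w′ and define 𝛘_a(t) := (ŵ(t)×a(t))/|w(t)| where ŵ := w/|w|. Then the unit vector ŵ is differentiable and satisfies dŵ/dt = 𝛘_a × ŵ. -/
open Matrix

/-- Euclidean magnitude of a vector in ℝ³. -/
noncomputable def mag (v : Fin 3 → ℝ) : ℝ := Real.sqrt (v ⬝ᵥ v)

/-- The unit tangent vector `ŵ := w/|w|` of a curve `w : ℝ → ℝ³`. -/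
noncomputable def uhat (w : ℝ → Fin 3 → ℝ) (t : ℝ) : Fin 3 → ℝ := (mag (w t))⁻¹ • w t

/-- The growth rate `α_a := (ŵ·a)/|w|`, where `a := w′`. -/
noncomputable def alphaA (w : ℝ → Fin 3 → ℝ) (t : ℝ) : ℝ :=
  (uhat w t ⬝ᵥ deriv w t) / mag (w t)

/-- The swing rate `𝛘_a := (ŵ×a)/|w|`, where `a := w′`. -/
noncomputable def chiA (w : ℝ → Fin 3 → ℝ) (t : ℝ) : Fin 3 → ℝ :=
  (mag (w t))⁻¹ • (uhat w t ⨯₃ deriv w t)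

/-- `α_b := (ŵ·b)/|w|`, where `b := w″`. -/
noncomputable def alphaB (w : ℝ → Fin 3 → ℝ) (t : ℝ) : ℝ :=
  (uhat w t ⬝ᵥ deriv (deriv w) t) / mag (w t)

/-- `𝛘_b := (ŵ×b)/|w|`, where `b := w″`. -/
noncomputable def chiB (w : ℝ → Fin 3 → ℝ) (t : ℝ) : Fin 3 → ℝ :=
  (mag (w t))⁻¹ • (uhat w t ⨯₃ deriv (deriv w) t)

/-- The unit vector `𝛘̂_a := 𝛘_a/|𝛘_a|`. -/
noncomputable def chiAhat (w : ℝ → Fin 3 → ℝ) (t : ℝ) : Fin 3 → ℝ :=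
  (mag (chiA w t))⁻¹ • chiA w t

/-- The scalar `c_b := ŵ·(𝛘̂_a×𝛘_b)`. -/
noncomputable def cB (w : ℝ → Fin 3 → ℝ) (t : ℝ) : ℝ :=
  uhat w t ⬝ᵥ (chiAhat w t ⨯₃ chiB w t)

/-- The scalar `d_b := −(𝛘̂_a·𝛘_b)`. -/
noncomputable def dB (w : ℝ → Fin 3 → ℝ) (t : ℝ) : ℝ :=
  -(chiAhat w t ⬝ᵥ chiB w t)

/-- The Darboux angular velocity vector `𝒟 := 𝛘_a + (c_b/|𝛘_a|) ŵ`. -/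
noncomputable def darboux (w : ℝ → Fin 3 → ℝ) (t : ℝ) : Fin 3 → ℝ :=
  chiA w t + (cB w t / mag (chiA w t)) • uhat w t

/-- For a differentiable nonvanishing curve `w : ℝ → ℝ³` with `a := w′` and
`𝛘_a := (ŵ×a)/|w|`, the unit tangent vector satisfies `dŵ/dt = 𝛘_a × ŵ`. -/
theorem deriv_uhat (w : ℝ → Fin 3 → ℝ)
    (hd : Differentiable ℝ w) (hw : ∀ t, w t ≠ 0) (t : ℝ) :
    HasDerivAt (uhat w) (chiA w t ⨯₃ uhat w t) t := by
  have hwa : HasDerivAt w (deriv w t) t := (hd t).hasDerivAt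
  set v := w t with hv
  set a := deriv w t with ha
  have hs0 : 0 < v ⬝ᵥ v := by
    obtain ⟨i, hi⟩ := Function.ne_iff.1 (hw t)
    exact Finset.sum_pos' (fun j _ => mul_self_nonneg _)
      ⟨i, Finset.mem_univ i, mul_self_pos.2 hi⟩
  have hspos : 0 < mag v := Real.sqrt_pos.2 hs0
  have hsq : mag v ^ 2 = v ⬝ᵥ v := Real.sq_sqrt hs0.le
  have hdot : HasDerivAt (fun s => w s ⬝ᵥ w s)
      (∑ i : Fin 3, (a i * w t i + w t i * a i)) t :=
    HasDerivAt.fun_sum fun i _ => (hasDerivAt_pi.1 hwa i).mul (hasDerivAt_pi.1 hwa i)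
  have hde : (∑ i : Fin 3, (a i * w t i + w t i * a i)) = 2 * (v ⬝ᵥ a) := by
    simp [dotProduct, Fin.sum_univ_three, ← hv, ← ha]; ring
  rw [hde] at hdot
  have hmagd : HasDerivAt (fun s => mag (w s)) ((v ⬝ᵥ a) / mag v) t := by
    have h := (Real.hasDerivAt_sqrt hs0.ne').comp t hdot
    refine h.congr_deriv ?_
    rw [mag]; field_simp
  have hinv : HasDerivAt (fun s => (mag (w s))⁻¹)
      (-((v ⬝ᵥ a) / mag v) / (mag v) ^ 2) t := hmagd.inv hspos.ne'
  have hmain : HasDerivAt (uhat w)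
      ((mag v)⁻¹ • a + (-((v ⬝ᵥ a) / mag v) / (mag v) ^ 2) • v) t := by
    have h := hinv.smul hwa
    exact h
  convert hmain using 1
  have hne := hspos.ne'
  have hsq' : mag v ^ 2 = v 0 * v 0 + v 1 * v 1 + v 2 * v 2 := by
    rw [hsq]; simp [dotProduct, Fin.sum_univ_three]
  funext i
  fin_cases i
  all_goals
    simp only [Fin.reduceFinMk, Fin.isValue, chiA, uhat, cross_apply, Pi.add_apply,
      Pi.smul_apply, smul_eq_mul, dotProduct, Fin.sum_univ_three, Matrix.cons_val_zero,
      Matrix.cons_val_one, Matrix.head_cons, Matrix.cons_val_two, Matrix.tail_cons, ← hv, ← ha]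
    field_simp
  · linear_combination (-(a 0)) * hsq'
  · linear_combination (-(a 1)) * hsq'
  · linear_combination (-(a 2)) * hsq'
end

section
/- (Quaternion-frame evolution with Darboux vector) Let w : ℝ → ℝ³ be twice differentiable with a := w′ and b := w″, and suppose w(t) ≠ 0 and 𝛘_a(t) ≠ 0 for all t, where ŵ := w/|w|, 𝛘_a := (ŵ×a)/|w|, 𝛘̂_a := 𝛘_a/|𝛘_a| and 𝛘_b := (ŵ×b)/|w|. Define c_b := ŵ·(𝛘̂_a×𝛘_b) and the Darboux angular velocity vector 𝒟 := 𝛘_a + (c_b/|𝛘_a|) ŵ. Then the ortho-normal frame (ŵ, 𝛘̂_a, ŵ×𝛘̂_a) evolves by rigid rotation with angular velocity 𝒟: dŵ/dt = 𝒟 × ŵ, d𝛘̂_a/dt = 𝒟 × 𝛘̂_a, and d(ŵ×𝛘̂_a)/dt = 𝒟 × (ŵ×𝛘̂_a). -/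
open Matrix

lemma hasDerivAt_dot {f g : ℝ → Fin 3 → ℝ} {f' g' : Fin 3 → ℝ} {t : ℝ}
    (hf : HasDerivAt f f' t) (hg : HasDerivAt g g' t) :
    HasDerivAt (fun s => f s ⬝ᵥ g s) (f' ⬝ᵥ g t + f t ⬝ᵥ g') t := by
  have hfi := fun i => hasDerivAt_pi.1 hf i
  have hgi := fun i => hasDerivAt_pi.1 hg i
  simp only [dotProduct, Fin.sum_univ_three]
  have h := (((hfi 0).mul (hgi 0)).add ((hfi 1).mul (hgi 1))).add ((hfi 2).mul (hgi 2))
  exact h.congr_deriv (by ring)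

lemma hasDerivAt_cross {f g : ℝ → Fin 3 → ℝ} {f' g' : Fin 3 → ℝ} {t : ℝ}
    (hf : HasDerivAt f f' t) (hg : HasDerivAt g g' t) :
    HasDerivAt (fun s => f s ⨯₃ g s) (f' ⨯₃ g t + f t ⨯₃ g') t := by
  have hfi := fun i => hasDerivAt_pi.1 hf i
  have hgi := fun i => hasDerivAt_pi.1 hg i
  rw [hasDerivAt_pi]
  intro i
  fin_cases i
  · have h := (((hfi 1).mul (hgi 2)).sub ((hfi 2).mul (hgi 1)))
    convert h using 1
    show (f' ⨯₃ g t) 0 + (f t ⨯₃ g') 0 = _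
    simp [cross_apply]; ring
    funext x; simp [cross_apply]
  · have h := (((hfi 2).mul (hgi 0)).sub ((hfi 0).mul (hgi 2)))
    convert h using 1
    show (f' ⨯₃ g t) 1 + (f t ⨯₃ g') 1 = _
    simp [cross_apply]; ring
    funext x; simp [cross_apply]
  · have h := (((hfi 0).mul (hgi 1)).sub ((hfi 1).mul (hgi 0)))
    convert h using 1
    show (f' ⨯₃ g t) 2 + (f t ⨯₃ g') 2 = _
    simp [cross_apply]; ring
    funext x; simp [cross_apply]

lemma smul_cross3 (c : ℝ) (u v : Fin 3 → ℝ) : (c • u) ⨯₃ v = c • (u ⨯₃ v) := by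
  funext i; fin_cases i <;> (show _ = _ ; simp [cross_apply])

lemma cross_smul3 (c : ℝ) (u v : Fin 3 → ℝ) : u ⨯₃ (c • v) = c • (u ⨯₃ v) := by
  funext i; fin_cases i <;> (show _ = _ ; simp [cross_apply])

lemma add_cross3 (u v x : Fin 3 → ℝ) : (u + v) ⨯₃ x = u ⨯₃ x + v ⨯₃ x := by
  funext i; fin_cases i <;> (show _ = _ ; simp [cross_apply])

lemma cross_key1 (W A : Fin 3 → ℝ) :
    (W ⨯₃ A) ⨯₃ W = (W ⬝ᵥ W) • A - (W ⬝ᵥ A) • W := by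
  funext i; fin_cases i <;>
    (show _ = _ ; simp [cross_apply, dotProduct, Fin.sum_univ_three]; ring)

lemma cross_key2 (W A B : Fin 3 → ℝ) :
    W ⬝ᵥ ((W ⨯₃ A) ⨯₃ (W ⨯₃ B)) = (W ⬝ᵥ (A ⨯₃ B)) * (W ⬝ᵥ W) := by
  simp [cross_apply, dotProduct, Fin.sum_univ_three]; ring

lemma cross_key3 (W A : Fin 3 → ℝ) :
    W ⨯₃ (W ⨯₃ A) = (W ⬝ᵥ A) • W - (W ⬝ᵥ W) • A := by
  funext i; fin_cases i <;>
    (show _ = _ ; simp [cross_apply, dotProduct, Fin.sum_univ_three]; ring)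

lemma cross_key (W A B : Fin 3 → ℝ) :
    ((W ⨯₃ A) ⬝ᵥ (W ⨯₃ A)) • (W ⨯₃ B) =
      ((W ⨯₃ A) ⬝ᵥ (W ⨯₃ B)) • (W ⨯₃ A) +
      (W ⬝ᵥ (A ⨯₃ B)) • ((W ⬝ᵥ A) • W - (W ⬝ᵥ W) • A) := by
  funext i; fin_cases i <;>
    (show _ = _ ; simp [cross_apply, dotProduct, Fin.sum_univ_three]; ring)

lemma dot_self_nonneg' (v : Fin 3 → ℝ) : 0 ≤ v ⬝ᵥ v := by
  simp only [dotProduct, Fin.sum_univ_three]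
  nlinarith [mul_self_nonneg (v 0), mul_self_nonneg (v 1), mul_self_nonneg (v 2)]

lemma dot_self_pos (v : Fin 3 → ℝ) (h : v ≠ 0) : 0 < v ⬝ᵥ v := by
  rcases Function.ne_iff.1 h with ⟨i, hi⟩
  simp only [dotProduct, Fin.sum_univ_three]
  fin_cases i
  · have h1 : 0 < v 0 * v 0 := mul_self_pos.2 hi
    nlinarith [mul_self_nonneg (v 1), mul_self_nonneg (v 2)]
  · have h1 : 0 < v 1 * v 1 := mul_self_pos.2 hi
    nlinarith [mul_self_nonneg (v 0), mul_self_nonneg (v 2)]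
  · have h1 : 0 < v 2 * v 2 := mul_self_pos.2 hi
    nlinarith [mul_self_nonneg (v 0), mul_self_nonneg (v 1)]

lemma mag_pos (v : Fin 3 → ℝ) (h : v ≠ 0) : 0 < mag v :=
  Real.sqrt_pos.2 (dot_self_pos v h)

lemma mag_sq (v : Fin 3 → ℝ) : mag v ^ 2 = v ⬝ᵥ v :=
  Real.sq_sqrt (dot_self_nonneg' v)

/-- Quaternion-frame evolution with Darboux vector: for a twice differentiable curve
`w : ℝ → ℝ³` with `w(t) ≠ 0` and `𝛘_a(t) ≠ 0`, the ortho-normal frame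
`(ŵ, 𝛘̂_a, ŵ×𝛘̂_a)` evolves by rigid rotation with angular velocity
`𝒟 = 𝛘_a + (c_b/|𝛘_a|) ŵ`. -/
theorem quaternion_frame_evolution (w : ℝ → Fin 3 → ℝ)
    (hd : Differentiable ℝ w) (hd' : Differentiable ℝ (deriv w))
    (hw : ∀ t, w t ≠ 0) (hchi : ∀ t, chiA w t ≠ 0) (t : ℝ) :
    HasDerivAt (uhat w) (darboux w t ⨯₃ uhat w t) t ∧
    HasDerivAt (chiAhat w) (darboux w t ⨯₃ chiAhat w t) t ∧
    HasDerivAt (fun s => uhat w s ⨯₃ chiAhat w s)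
      (darboux w t ⨯₃ (uhat w t ⨯₃ chiAhat w t)) t := by
  set W : Fin 3 → ℝ := w t with hWdef
  set A : Fin 3 → ℝ := deriv w t with hAdef
  set B : Fin 3 → ℝ := deriv (deriv w) t with hBdef
  set m : ℝ := mag (w t) with hmdef
  set r : ℝ := mag (chiA w t) with hrdef
  set p : ℝ := W ⬝ᵥ A with hpdef
  set q : ℝ := (W ⨯₃ A) ⬝ᵥ (W ⨯₃ B) with hqdef
  set d : ℝ := W ⬝ᵥ (A ⨯₃ B) with hddef
  have hm_pos : 0 < m := mag_pos _ (hw t)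
  have hm_ne : m ≠ 0 := ne_of_gt hm_pos
  have hn_pos : (0:ℝ) < W ⬝ᵥ W := dot_self_pos _ (hw t)
  have hr_pos : 0 < r := mag_pos _ (hchi t)
  have hr_ne : r ≠ 0 := ne_of_gt hr_pos
  have hm2 : m ^ 2 = W ⬝ᵥ W := mag_sq W
  have hwA : HasDerivAt w A t := (hd t).hasDerivAt
  have hwB : HasDerivAt (deriv w) B t := (hd' t).hasDerivAt
  -- clean forms
  have hu : uhat w t = m⁻¹ • W := rfl
  have hχA : chiA w t = (m ^ 2)⁻¹ • (W ⨯₃ A) := by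
    show m⁻¹ • ((m⁻¹ • W) ⨯₃ A) = _
    rw [smul_cross3, smul_smul, ← mul_inv, ← pow_two]
  have hχB : chiB w t = (m ^ 2)⁻¹ • (W ⨯₃ B) := by
    show m⁻¹ • ((m⁻¹ • W) ⨯₃ B) = _
    rw [smul_cross3, smul_smul, ← mul_inv, ← pow_two]
  have hr2 : r ^ 2 = chiA w t ⬝ᵥ chiA w t := mag_sq _
  have hk : (W ⨯₃ A) ⬝ᵥ (W ⨯₃ A) = m ^ 4 * r ^ 2 := by
    rw [hχA] at hr2
    rw [smul_dotProduct, dotProduct_smul, smul_eq_mul, smul_eq_mul] at hr2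
    field_simp at hr2
    simp only [dotProduct, Fin.sum_univ_three] at hr2 ⊢
    linear_combination -hr2
  -- derivative chain
  have hN : HasDerivAt (fun s => w s ⬝ᵥ w s) (2 * p) t := by
    have h := hasDerivAt_dot hwA hwA
    convert h using 1
    rw [hpdef, dotProduct_comm]; ring
  have hM : HasDerivAt (fun s => mag (w s)) (p / m) t := by
    have h := (Real.hasDerivAt_sqrt (ne_of_gt hn_pos)).comp t hN
    refine h.congr_deriv ?_
    rw [show Real.sqrt (W ⬝ᵥ W) = m from rfl]
    field_simp
  have hU : HasDerivAt (uhat w) (m⁻¹ • A + (-(p / m) / m ^ 2) • W) t :=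
    (hM.inv hm_ne).smul hwA
  set CA' : Fin 3 → ℝ := (m ^ 2)⁻¹ • (W ⨯₃ B) + (-(2 * p) / m ^ 4) • (W ⨯₃ A) with hCAdef
  have hCA : HasDerivAt (chiA w) CA' t := by
    have h := (hM.inv hm_ne).smul (hasDerivAt_cross hU hwB)
    refine h.congr_deriv ?_
    simp only [Pi.inv_apply, ← hAdef, ← hmdef, hu, smul_cross3, add_cross3, cross_self, smul_zero,
      zero_add, add_zero, smul_add, hCAdef]
    match_scalars <;> field_simp <;> (try ring) <;> (try tauto)
  have hQne : chiA w t ⬝ᵥ chiA w t ≠ 0 := ne_of_gt (dot_self_pos _ (hchi t))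
  set s1 : ℝ := chiA w t ⬝ᵥ CA' with hs1def
  have hR : HasDerivAt (fun s => mag (chiA w s)) (s1 / r) t := by
    have h := (Real.hasDerivAt_sqrt hQne).comp t (hasDerivAt_dot hCA hCA)
    refine h.congr_deriv ?_
    rw [show Real.sqrt (chiA w t ⬝ᵥ chiA w t) = r from rfl,
      dotProduct_comm CA', ← hs1def]
    field_simp; ring
  have hCH : HasDerivAt (chiAhat w) (r⁻¹ • CA' + (-(s1 / r) / r ^ 2) • chiA w t) t :=
    (hR.inv hr_ne).smul hCA
  have hs1 : s1 = q / m ^ 4 - 2 * p * r ^ 2 / m ^ 2 := by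
    rw [hs1def, hχA, hCAdef, dotProduct_add, smul_dotProduct,
      smul_dotProduct, dotProduct_smul, dotProduct_smul,
      smul_eq_mul, smul_eq_mul, smul_eq_mul, smul_eq_mul, hk, ← hqdef]
    field_simp; ring
  have hcB : cB w t = d / (r * m ^ 3) := by
    show (m⁻¹ • W) ⬝ᵥ ((r⁻¹ • chiA w t) ⨯₃ chiB w t) = _
    rw [hχA, hχB, smul_smul, smul_cross3, cross_smul3, smul_smul,
      smul_dotProduct, dotProduct_smul, smul_eq_mul, smul_eq_mul,
      cross_key2, ← hddef, ← hm2]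
    field_simp
  have hk_ne : (m ^ 4 * r ^ 2 : ℝ) ≠ 0 := by positivity
  have hWB : W ⨯₃ B = (m ^ 4 * r ^ 2)⁻¹ • (q • (W ⨯₃ A) + d • (p • W - m ^ 2 • A)) := by
    have h := cross_key W A B
    rw [hk, ← hqdef, ← hddef, ← hpdef, ← hm2] at h
    rw [eq_inv_smul_iff₀ hk_ne]
    exact h
  -- part 1
  have g1 : HasDerivAt (uhat w) (darboux w t ⨯₃ uhat w t) t := by
    have e : darboux w t ⨯₃ uhat w t = m⁻¹ • A + (-(p / m) / m ^ 2) • W := by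
      show (chiA w t + (cB w t / r) • uhat w t) ⨯₃ uhat w t = _
      rw [add_cross3, hu, smul_cross3, cross_self, smul_zero, add_zero, hχA,
        smul_cross3, cross_smul3, cross_key1, ← hm2, ← hpdef]
      match_scalars <;> field_simp <;> (try ring) <;> (try tauto)
    rw [e]; exact hU
  -- part 2
  have g2 : HasDerivAt (chiAhat w) (darboux w t ⨯₃ chiAhat w t) t := by
    have e : darboux w t ⨯₃ chiAhat w t = r⁻¹ • CA' + (-(s1 / r) / r ^ 2) • chiA w t := by
      show (chiA w t + (cB w t / r) • uhat w t) ⨯₃ (r⁻¹ • chiA w t) = _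
      rw [add_cross3, cross_smul3, cross_self, smul_zero, hu, hcB, hχA, hCAdef, hs1,
        smul_cross3, cross_smul3, cross_smul3, smul_cross3, cross_key3, ← hm2, ← hpdef,
        hWB]
      match_scalars <;> field_simp <;> (try ring) <;> (try tauto)
    rw [e]; exact hCH
  refine ⟨g1, g2, ?_⟩
  have g3 := hasDerivAt_cross g1 g2
  convert g3 using 1
  exact leibniz_cross _ _ _
end

section
/- Let w : ℝ → ℝ³ be twice differentiable with a := w′, b := w″ and w(t) ≠ 0 for all t, and define α_a := (ŵ·a)/|w|, 𝛘_a := (ŵ×a)/|w| and 𝛘_b := (ŵ×b)/|w| where ŵ := w/|w|. Then 𝛘_a is differentiable and satisfies d𝛘_a/dt = −2α_a 𝛘_a + 𝛘_b. -/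
open Matrix

/-- For a twice differentiable nonvanishing curve `w : ℝ → ℝ³`,
the swing rate satisfies `d𝛘_a/dt = −2α_a 𝛘_a + 𝛘_b`. -/
theorem deriv_chiA (w : ℝ → Fin 3 → ℝ)
    (hd : Differentiable ℝ w) (hd' : Differentiable ℝ (deriv w))
    (hw : ∀ t, w t ≠ 0) (t : ℝ) :
    HasDerivAt (chiA w) ((-2 * alphaA w t) • chiA w t + chiB w t) t := by
  -- componentwise derivatives
  have hwc : ∀ s (i : Fin 3), HasDerivAt (fun u => w u i) (deriv w s i) s :=
    fun s i => (hasDerivAt_pi.mp (hd s).hasDerivAt) i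
  have hac : ∀ s (i : Fin 3), HasDerivAt (fun u => deriv w u i) (deriv (deriv w) s i) s :=
    fun s i => (hasDerivAt_pi.mp (hd' s).hasDerivAt) i
  -- g = |w|²
  set g : ℝ → ℝ := fun s => w s ⬝ᵥ w s with hgdef
  have hgpos : ∀ s, 0 < g s := by
    intro s
    rcases lt_or_eq_of_le (Finset.sum_nonneg fun i _ => mul_self_nonneg (w s i)) with h | h
    · exact h
    · exact absurd (dotProduct_self_eq_zero.mp h.symm) (hw s)
  have hmagsq : ∀ s, mag (w s) ^ 2 = g s := fun s => Real.sq_sqrt (hgpos s).le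
  have hmagpos : ∀ s, 0 < mag (w s) := fun s => Real.sqrt_pos.mpr (hgpos s)
  have hg : ∀ s, HasDerivAt g (2 * (w s ⬝ᵥ deriv w s)) s := by
    intro s
    have : HasDerivAt g (∑ i, (deriv w s i * w s i + w s i * deriv w s i)) s :=
      HasDerivAt.fun_sum fun i _ => (hwc s i).mul (hwc s i)
    convert this using 1
    simp only [dotProduct, Finset.mul_sum]
    congr 1; ext i; ring
  -- h = w ⨯₃ w'
  set h : ℝ → Fin 3 → ℝ := fun s => w s ⨯₃ deriv w s with hhdef
  have hh : ∀ s, HasDerivAt h (w s ⨯₃ deriv (deriv w) s) s := by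
    intro s
    rw [hasDerivAt_pi]
    intro i
    have e : ∀ u, h u = ![w u 1 * deriv w u 2 - w u 2 * deriv w u 1,
        w u 2 * deriv w u 0 - w u 0 * deriv w u 2,
        w u 0 * deriv w u 1 - w u 1 * deriv w u 0] := fun u => cross_apply _ _
    have target : (w s ⨯₃ deriv (deriv w) s) i =
        (![deriv w s 1 * deriv w s 2 + w s 1 * deriv (deriv w) s 2
            - (deriv w s 2 * deriv w s 1 + w s 2 * deriv (deriv w) s 1),
          deriv w s 2 * deriv w s 0 + w s 2 * deriv (deriv w) s 0
            - (deriv w s 0 * deriv w s 2 + w s 0 * deriv (deriv w) s 2),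
          deriv w s 0 * deriv w s 1 + w s 0 * deriv (deriv w) s 1
            - (deriv w s 1 * deriv w s 0 + w s 1 * deriv (deriv w) s 0)] : Fin 3 → ℝ) i := by
      rw [cross_apply]
      fin_cases i <;> simp <;> ring
    rw [target]
    simp only [e]
    fin_cases i <;> simp only [Matrix.cons_val_zero, Matrix.cons_val_one, Matrix.head_cons,
      Matrix.cons_val_two, Matrix.tail_cons] <;>
      exact (((hwc s _).mul (hac s _)).sub ((hwc s _).mul (hac s _)))
  -- chiA = g⁻¹ • h
  have hchiA : ∀ s, chiA w s = (g s)⁻¹ • h s := by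
    intro s
    have : uhat w s ⨯₃ deriv w s = (mag (w s))⁻¹ • (w s ⨯₃ deriv w s) := by
      rw [uhat, _root_.map_smul, LinearMap.smul_apply]
    rw [chiA, this, smul_smul, ← mul_inv, ← sq, hmagsq]
  have hchiB : chiB w t = (g t)⁻¹ • (w t ⨯₃ deriv (deriv w) t) := by
    have : uhat w t ⨯₃ deriv (deriv w) t = (mag (w t))⁻¹ • (w t ⨯₃ deriv (deriv w) t) := by
      rw [uhat, _root_.map_smul, LinearMap.smul_apply]
    rw [chiB, this, smul_smul, ← mul_inv, ← sq, hmagsq]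
  have key : HasDerivAt (fun s => (g s)⁻¹ • h s)
      ((g t)⁻¹ • (w t ⨯₃ deriv (deriv w) t)
        + (-(2 * (w t ⬝ᵥ deriv w t)) / g t ^ 2) • h t) t :=
    HasDerivAt.smul (((hg t).inv (hgpos t).ne')) (hh t)
  have := key.congr_of_eventuallyEq (Filter.Eventually.of_forall fun s => (hchiA s))
  refine this.congr_deriv (Eq.symm ?_)
  rw [hchiA t, hchiB, add_comm]
  congr 1
  · rw [smul_smul]
    congr 1
    rw [alphaA, uhat, smul_dotProduct]
    have hm := (hmagpos t).ne'
    field_simp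
    rw [← hmagsq t, smul_eq_mul]
    field_simp
end

section
/- (Ertel's theorem) Let u : ℝ³ × ℝ → ℝ³ and w : ℝ³ × ℝ → ℝ³ be continuously differentiable vector fields, and let μ : ℝ³ × ℝ → ℝ be twice continuously differentiable. Suppose w satisfies the Lagrangian evolution equation ∂w/∂t + (u·∇)w = (w·∇)u everywhere. Then the nonlinear terms cancel so that the material derivative D/Dt = ∂/∂t + u·∇ commutes with the operator w·∇ applied to μ: D(w·∇μ)/Dt = w·∇(Dμ/Dt), i.e. ∂(w·∇μ)/∂t + (u·∇)(w·∇μ) = (w·∇)(∂μ/∂t + (u·∇)μ). -/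
open Matrix

/-- Time partial derivative `∂f/∂t` of a scalar field `f : ℝ³ × ℝ → ℝ`. -/
noncomputable def pt (f : (Fin 3 → ℝ) × ℝ → ℝ) (z : (Fin 3 → ℝ) × ℝ) : ℝ :=
  fderiv ℝ f z (0, 1)

/-- Spatial partial derivative `∂f/∂xⱼ` of a scalar field `f : ℝ³ × ℝ → ℝ`. -/
noncomputable def pd (f : (Fin 3 → ℝ) × ℝ → ℝ) (j : Fin 3) (z : (Fin 3 → ℝ) × ℝ) : ℝ :=
  fderiv ℝ f z (Pi.single j 1, 0)

section aux

variable {μ : (Fin 3 → ℝ) × ℝ → ℝ}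

lemma fderiv_fderiv_apply (hμ : ContDiff ℝ 2 μ) (z v v' : (Fin 3 → ℝ) × ℝ) :
    fderiv ℝ (fun y => fderiv ℝ μ y v) z v' = fderiv ℝ (fderiv ℝ μ) z v' v := by
  have hf : DifferentiableAt ℝ (fderiv ℝ μ) z :=
    (hμ.fderiv_right (m := 1) (le_refl _)).differentiable (by norm_num) z
  have := fderiv_clm_apply (c := fderiv ℝ μ) (u := fun _ => v) hf (differentiableAt_const v)
  rw [show (fun y => fderiv ℝ μ y v) = fun y => (fderiv ℝ μ y) ((fun _ => v) y) from rfl, this]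
  simp

lemma swap_lemma (hμ : ContDiff ℝ 2 μ) (z v v' : (Fin 3 → ℝ) × ℝ) :
    fderiv ℝ (fun y => fderiv ℝ μ y v) z v' = fderiv ℝ (fun y => fderiv ℝ μ y v') z v := by
  rw [fderiv_fderiv_apply hμ, fderiv_fderiv_apply hμ]
  exact (hμ.contDiffAt.isSymmSndFDerivAt (by norm_num)) v' v

lemma alg (a c W U P R : Fin 3 → ℝ) (b Q du : Fin 3 → Fin 3 → ℝ)
    (h1 : ∀ k, a k + ∑ j, U j * b k j = ∑ j, W j * du k j)
    (h2 : ∀ k, P k = R k) (h3 : ∀ k j, Q k j = Q j k) :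
    ∑ k, (a k * c k + W k * P k) + ∑ j, U j * ∑ k, (b k j * c k + W k * Q k j)
      = ∑ j, W j * (R j + ∑ k, (du k j * c k + U k * Q k j)) := by
  simp only [Fin.sum_univ_three] at h1 ⊢
  linear_combination (c 0) * h1 0 + (c 1) * h1 1 + (c 2) * h1 2
    + (W 0) * h2 0 + (W 1) * h2 1 + (W 2) * h2 2
    + (U 0 * W 1) * h3 1 0 + (U 0 * W 2) * h3 2 0 + (U 1 * W 0) * h3 0 1
    + (U 1 * W 2) * h3 2 1 + (U 2 * W 0) * h3 0 2 + (U 2 * W 1) * h3 1 2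

end aux


/-- Ertel's theorem: if the `C¹` vector field `w` satisfies
`∂w/∂t + (u·∇)w = (w·∇)u` along the `C¹` velocity field `u`, then for any `C²` scalar
`μ`, the material derivative `D/Dt = ∂/∂t + u·∇` commutes with `w·∇`:
`D(w·∇μ)/Dt = w·∇(Dμ/Dt)`. -/
theorem ertel_theorem (u w : (Fin 3 → ℝ) × ℝ → Fin 3 → ℝ)
    (μ : (Fin 3 → ℝ) × ℝ → ℝ)
    (hu : ContDiff ℝ 1 u) (hw : ContDiff ℝ 1 w) (hμ : ContDiff ℝ 2 μ)
    (hevol : ∀ z i, pt (fun y => w y i) z + ∑ j, u z j * pd (fun y => w y i) j z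
        = ∑ j, w z j * pd (fun y => u y i) j z)
    (z : (Fin 3 → ℝ) × ℝ) :
    pt (fun y => ∑ k, w y k * pd μ k y) z
        + ∑ j, u z j * pd (fun y => ∑ k, w y k * pd μ k y) j z
      = ∑ j, w z j * pd (fun y => pt μ y + ∑ k, u y k * pd μ k y) j z := by
  let e : Fin 3 → ((Fin 3 → ℝ) × ℝ) := fun j => (Pi.single j 1, 0)
  let τ : (Fin 3 → ℝ) × ℝ := (0, 1)
  have hμ1 : ContDiff ℝ 1 (fderiv ℝ μ) := hμ.fderiv_right (by norm_num)
  have hpdc : ∀ v : (Fin 3 → ℝ) × ℝ, ContDiff ℝ 1 fun y => fderiv ℝ μ y v := fun v =>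
    hμ1.clm_apply contDiff_const
  have hwk : ∀ k, DifferentiableAt ℝ (fun y => w y k) z := fun k =>
    ((contDiff_pi.1 hw k).differentiable (by norm_num)) z
  have huk : ∀ k, DifferentiableAt ℝ (fun y => u y k) z := fun k =>
    ((contDiff_pi.1 hu k).differentiable (by norm_num)) z
  have hpd : ∀ v : (Fin 3 → ℝ) × ℝ, DifferentiableAt ℝ (fun y => fderiv ℝ μ y v) z := fun v =>
    ((hpdc v).differentiable (by norm_num)) z
  -- general expansion lemma for ∑ k, f y k * ∂μ/∂x_k
  have expand : ∀ (f : (Fin 3 → ℝ) × ℝ → Fin 3 → ℝ), (∀ k, DifferentiableAt ℝ (fun y => f y k) z) →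
      ∀ v : (Fin 3 → ℝ) × ℝ, fderiv ℝ (fun y => ∑ k, f y k * fderiv ℝ μ y (e k)) z v
        = ∑ k, (fderiv ℝ (fun y => f y k) z v * fderiv ℝ μ z (e k)
            + f z k * fderiv ℝ (fun y => fderiv ℝ μ y (e k)) z v) := by
    intro f hf v
    rw [fderiv_fun_sum (A := fun k y => f y k * fderiv ℝ μ y (e k)) (fun k _ => (hf k).mul (hpd (e k)))]
    rw [ContinuousLinearMap.sum_apply]
    refine Finset.sum_congr rfl fun k _ => ?_
    rw [fderiv_fun_mul (hf k) (hpd (e k))]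
    simp only [ContinuousLinearMap.add_apply, ContinuousLinearMap.coe_smul',
      Pi.smul_apply, smul_eq_mul]
    ring
  simp only [pt, pd] at hevol ⊢
  have hL : ∀ v : (Fin 3 → ℝ) × ℝ, fderiv ℝ (fun y => ∑ k, w y k * fderiv ℝ μ y (Pi.single k 1, 0)) z v
      = ∑ k, (fderiv ℝ (fun y => w y k) z v * fderiv ℝ μ z (e k)
          + w z k * fderiv ℝ (fun y => fderiv ℝ μ y (e k)) z v) := fun v => expand w hwk v
  have hR : ∀ j, fderiv ℝ (fun y => fderiv ℝ μ y (0, 1)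
        + ∑ k, u y k * fderiv ℝ μ y (Pi.single k 1, 0)) z (e j)
      = fderiv ℝ (fun y => fderiv ℝ μ y τ) z (e j)
        + ∑ k, (fderiv ℝ (fun y => u y k) z (e j) * fderiv ℝ μ z (e k)
            + u z k * fderiv ℝ (fun y => fderiv ℝ μ y (e k)) z (e j)) := by
    intro j
    rw [show (fun y => fderiv ℝ μ y (0, 1)
        + ∑ k, u y k * fderiv ℝ μ y (Pi.single k 1, 0))
      = fun y => (fun x => fderiv ℝ μ x τ) y
        + (fun x => ∑ k, u x k * fderiv ℝ μ x (e k)) y from rfl]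
    rw [fderiv_fun_add (hpd τ) (DifferentiableAt.fun_sum (A := fun k y => u y k * fderiv ℝ μ y (e k)) fun k _ => (huk k).mul (hpd (e k)))]
    rw [ContinuousLinearMap.add_apply, expand u huk (e j)]
  rw [hL τ]
  simp +zetaDelta only [hL, hR]
  exact alg (fun k => fderiv ℝ (fun y => w y k) z τ) (fun k => fderiv ℝ μ z (e k))
    (w z) (u z) (fun k => fderiv ℝ (fun y => fderiv ℝ μ y (e k)) z τ)
    (fun j => fderiv ℝ (fun y => fderiv ℝ μ y τ) z (e j))
    (fun k j => fderiv ℝ (fun y => w y k) z (e j))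
    (fun k j => fderiv ℝ (fun y => fderiv ℝ μ y (e k)) z (e j))
    (fun k j => fderiv ℝ (fun y => u y k) z (e j))
    (fun k => hevol z k) (fun k => swap_lemma hμ z (e k) τ)
    (fun k j => swap_lemma hμ z (e k) (e j))
end

section
/- Let u : ℝ³ × ℝ → ℝ³ and p : ℝ³ × ℝ → ℝ be twice continuously differentiable and satisfy the Euler equation ∂u/∂t + (u·∇)u = −∇p, and let w : ℝ³ × ℝ → ℝ³ be continuously differentiable with ∂w/∂t + (u·∇)w = (w·∇)u. Then the stretching vector a := (w·∇)u satisfies ∂a/∂t + (u·∇)a = −P w, where P is the Hessian matrix of the pressure, P_{ij} = ∂²p/∂xᵢ∂xⱼ, and (P w)ᵢ = Σⱼ P_{ij} wⱼ. -/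
open Matrix

namespace StretchAux

abbrev E3 := (Fin 3 → ℝ) × ℝ

lemma fderiv_C1 {f : E3 → ℝ} (hf : ContDiff ℝ 2 f) (v : E3) :
    ContDiff ℝ 1 (fun y => fderiv ℝ f y v) :=
  (hf.fderiv_right (m := 1) (by norm_num)).clm_apply contDiff_const

lemma comm2 {f : E3 → ℝ} (hf : ContDiff ℝ 2 f) (v w z : E3) :
    fderiv ℝ (fun y => fderiv ℝ f y v) z w = fderiv ℝ (fun y => fderiv ℝ f y w) z v := by
  have hdf : Differentiable ℝ (fderiv ℝ f) :=
    (hf.fderiv_right (m := 1) (by norm_num)).differentiable one_ne_zero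
  have hf' : ∀ y, HasFDerivAt f (fderiv ℝ f y) y := fun y =>
    ((hf.differentiable (by norm_num)) y).hasFDerivAt
  have hf'' : HasFDerivAt (fderiv ℝ f) (fderiv ℝ (fderiv ℝ f) z) z := (hdf z).hasFDerivAt
  have hev : ∀ a b : E3, fderiv ℝ (fun y => fderiv ℝ f y a) z b
      = fderiv ℝ (fderiv ℝ f) z b a := by
    intro a b
    have h : HasFDerivAt (fun y => fderiv ℝ f y a)
        (((ContinuousLinearMap.apply ℝ ℝ a)).comp (fderiv ℝ (fderiv ℝ f) z)) z :=
      (ContinuousLinearMap.apply ℝ ℝ a).hasFDerivAt.comp z hf''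
    rw [h.fderiv]; rfl
  rw [hev v w, hev w v]
  exact second_derivative_symmetric hf' hf'' w v

lemma expand (W : E3 → Fin 3 → ℝ) (g : Fin 3 → E3 → ℝ) (z v : E3)
    (hW : ∀ k, DifferentiableAt ℝ (fun y => W y k) z)
    (hg : ∀ k, DifferentiableAt ℝ (g k) z) :
    fderiv ℝ (fun y => ∑ k, W y k * g k y) z v
      = ∑ k, (fderiv ℝ (fun y => W y k) z v * g k z + W z k * fderiv ℝ (g k) z v) := by
  rw [fderiv_fun_sum (fun k _ => (hW k).fun_mul (hg k)), ContinuousLinearMap.sum_apply]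
  refine Finset.sum_congr rfl fun k _ => ?_
  rw [fderiv_fun_mul (hW k) (hg k)]
  simp [ContinuousLinearMap.add_apply, ContinuousLinearMap.smul_apply]
  ring

end StretchAux

open StretchAux in
/-- If `u, p` are `C²` and satisfy the Euler equation `∂u/∂t + (u·∇)u = −∇p`, and the
`C¹` field `w` satisfies `∂w/∂t + (u·∇)w = (w·∇)u`, then the stretching vector
`a := (w·∇)u` satisfies `∂a/∂t + (u·∇)a = −P w`, where `P_{ij} = ∂²p/∂xᵢ∂xⱼ` is the
pressure Hessian. -/
theorem stretching_vector_evolution (u : (Fin 3 → ℝ) × ℝ → Fin 3 → ℝ)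
    (p : (Fin 3 → ℝ) × ℝ → ℝ) (w : (Fin 3 → ℝ) × ℝ → Fin 3 → ℝ)
    (hu : ContDiff ℝ 2 u) (hp : ContDiff ℝ 2 p) (hw : ContDiff ℝ 1 w)
    (heuler : ∀ z i, pt (fun y => u y i) z + ∑ j, u z j * pd (fun y => u y i) j z
        = -pd p i z)
    (hevol : ∀ z i, pt (fun y => w y i) z + ∑ j, u z j * pd (fun y => w y i) j z
        = ∑ j, w z j * pd (fun y => u y i) j z)
    (z : (Fin 3 → ℝ) × ℝ) (i : Fin 3) :
    pt (fun y => ∑ k, w y k * pd (fun y' => u y' i) k y) z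
        + ∑ j, u z j * pd (fun y => ∑ k, w y k * pd (fun y' => u y' i) k y) j z
      = -∑ j, pd (fun y => pd p j y) i z * w z j := by
  simp only [pt, pd] at heuler hevol ⊢
  have hui : ∀ k, ContDiff ℝ 2 (fun y => u y k) := fun k => contDiff_pi.mp hu k
  have hwk : ∀ k, Differentiable ℝ (fun y => w y k) := fun k =>
    (contDiff_pi.mp hw k).differentiable one_ne_zero
  have hud : ∀ k, Differentiable ℝ (fun y => u y k) := fun k =>
    (hui k).differentiable (by norm_num)
  have hDu : ∀ k v, Differentiable ℝ (fun y => fderiv ℝ (fun y' => u y' k) y v) :=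
    fun k v => (fderiv_C1 (hui k) v).differentiable one_ne_zero
  -- expansion of the derivative of the stretching vector
  have hexpand : ∀ v : E3,
      fderiv ℝ (fun y => ∑ k, w y k * fderiv ℝ (fun y' => u y' i) y (Pi.single k 1, 0)) z v
        = ∑ k, (fderiv ℝ (fun y => w y k) z v * fderiv ℝ (fun y' => u y' i) z (Pi.single k 1, 0)
            + w z k * fderiv ℝ (fun y => fderiv ℝ (fun y' => u y' i) y (Pi.single k 1, 0)) z v) :=
    fun v => expand w (fun k y => fderiv ℝ (fun y' => u y' i) y (Pi.single k 1, 0)) z v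
      (fun k => (hwk k) z) (fun k => (hDu i (Pi.single k 1, 0)) z)
  -- differentiating the Euler equation in direction `e k`
  have hEfun : (fun y => fderiv ℝ (fun y' => u y' i) y (0, 1)
        + ∑ j, u y j * fderiv ℝ (fun y' => u y' i) y (Pi.single j 1, 0))
      = fun y => -(fderiv ℝ p y (Pi.single i 1, 0)) := funext fun y => heuler y i
  have hkey : ∀ k : Fin 3,
      fderiv ℝ (fun y => fderiv ℝ (fun y' => u y' i) y (Pi.single k 1, 0)) z (0, 1)
        + ∑ j, u z j *
            fderiv ℝ (fun y => fderiv ℝ (fun y' => u y' i) y (Pi.single k 1, 0)) z (Pi.single j 1, 0)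
      = -(fderiv ℝ (fun y => fderiv ℝ p y (Pi.single i 1, 0)) z (Pi.single k 1, 0))
        - ∑ j, fderiv ℝ (fun y => u y j) z (Pi.single k 1, 0)
            * fderiv ℝ (fun y' => u y' i) z (Pi.single j 1, 0) := by
    intro k
    have h2 := congrArg (fun f => fderiv ℝ f z (Pi.single k 1, 0)) hEfun
    beta_reduce at h2
    have hA : DifferentiableAt ℝ (fun y => fderiv ℝ (fun y' => u y' i) y ((0 : Fin 3 → ℝ), (1:ℝ))) z :=
      (hDu i (0, 1)) z
    have hB : DifferentiableAt ℝ
        (fun y => ∑ j, u y j * fderiv ℝ (fun y' => u y' i) y (Pi.single j 1, 0)) z :=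
      DifferentiableAt.fun_sum fun j _ => ((hud j) z).mul ((hDu i (Pi.single j 1, 0)) z)
    rw [fderiv_fun_add hA hB] at h2
    rw [fderiv_fun_neg] at h2
    rw [ContinuousLinearMap.add_apply, ContinuousLinearMap.neg_apply] at h2
    rw [expand u (fun j y => fderiv ℝ (fun y' => u y' i) y (Pi.single j 1, 0)) z _
      (fun j => (hud j) z) (fun j => (hDu i (Pi.single j 1, 0)) z)] at h2
    rw [comm2 (hui i) (0, 1) (Pi.single k 1, 0) z] at h2
    have hcB : ∀ j : Fin 3,
        fderiv ℝ (fun y => fderiv ℝ (fun y' => u y' i) y (Pi.single j 1, 0)) z (Pi.single k 1, 0)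
          = fderiv ℝ (fun y => fderiv ℝ (fun y' => u y' i) y (Pi.single k 1, 0)) z (Pi.single j 1, 0) :=
      fun j => comm2 (hui i) (Pi.single j 1, 0) (Pi.single k 1, 0) z
    simp only [hcB] at h2
    rw [Finset.sum_add_distrib] at h2
    linarith [h2]
  have hsym : ∀ j : Fin 3,
      fderiv ℝ (fun y => fderiv ℝ p y (Pi.single j 1, 0)) z (Pi.single i 1, 0)
        = fderiv ℝ (fun y => fderiv ℝ p y (Pi.single i 1, 0)) z (Pi.single j 1, 0) :=
    fun j => comm2 hp (Pi.single j 1, 0) (Pi.single i 1, 0) z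
  simp only [hexpand, hsym]
  have hev' := fun k => hevol z k
  have hkey' := hkey
  simp only [Fin.sum_univ_three] at hev' hkey' ⊢
  linear_combination
    (fderiv ℝ (fun y' => u y' i) z (Pi.single 0 1, 0)) * hev' 0
    + (fderiv ℝ (fun y' => u y' i) z (Pi.single 1 1, 0)) * hev' 1
    + (fderiv ℝ (fun y' => u y' i) z (Pi.single 2 1, 0)) * hev' 2
    + w z 0 * hkey' 0 + w z 1 * hkey' 1 + w z 2 * hkey' 2
end
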